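/- arXiv:1105.3085 — 3 statements merged into one kernel-verified Lean document; each statement's English description precedes it below -/
import Mathlib

section
/- If ν₁ and ν₂ satisfy the linear relation αH + βH' + γ = 0 (with H = (ν₁+ν₂)/2, H' = (ν₁-ν₂)/2), then the parallel curvatures ν̄ᵢ = ε·νᵢ/(1-a·νᵢ) satisfy ε(α + 2aγ)H̄ + εβH̄' + γ = -a(α + aγ)K̄, where H̄, H̄', K̄ are formed from ν̄₁, ν̄₂. -/
/-- If ν₁ and ν₂ satisfy αH + βH' + γ = 0, then the parallel curvatures
νbᵢ = ε·νᵢ/(1-a·νᵢ) satisfy ε(α + 2aγ)Hb + εβHb' + γ = -a(α + aγ)Kb. -/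
theorem parallel_of_linear_W_surface
    (ν₁ ν₂ a α β γ ε νb₁ νb₂ Hb Hb' Kb : ℝ) (ha : a ≠ 0)
    (h1 : 1 - a * ν₁ ≠ 0) (h2 : 1 - a * ν₂ ≠ 0)
    (hε : ε = Real.sign ((1 - a * ν₁) * (1 - a * ν₂)))
    (hrel : α * ((ν₁ + ν₂) / 2) + β * ((ν₁ - ν₂) / 2) + γ = 0)
    (hn1 : νb₁ = ε * ν₁ / (1 - a * ν₁))
    (hn2 : νb₂ = ε * ν₂ / (1 - a * ν₂))
    (hHb : Hb = (νb₁ + νb₂) / 2) (hHb' : Hb' = (νb₁ - νb₂) / 2) (hKb : Kb = νb₁ * νb₂) :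
    ε * (α + 2 * a * γ) * Hb + ε * β * Hb' + γ = -a * (α + a * γ) * Kb := by
  subst hKb hHb hHb' hn1 hn2
  have hs : ε = 1 ∨ ε = -1 := by
    rcases Real.sign_apply_eq_of_ne_zero _ (mul_ne_zero h1 h2) with h | h <;>
      rw [hε, h] <;> simp
  rcases hs with h | h <;> subst h <;> field_simp <;>
    linear_combination 2 * hrel
end

section
/- If ν₁ and ν₂ satisfy K = αH + βH' + γ (with K = ν₁ν₂, H = (ν₁+ν₂)/2, H' = (ν₁-ν₂)/2), then the parallel curvatures ν̄ᵢ = ε·νᵢ/(1-a·νᵢ) satisfy ε(α + 2aγ)H̄ + εβH̄' + γ = (1 - aα - a²γ)K̄. -/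
/-- If ν₁ and ν₂ satisfy K = αH + βH' + γ, then the parallel curvatures
νbᵢ = ε·νᵢ/(1-a·νᵢ) satisfy ε(α + 2aγ)Hb + εβHb' + γ = (1 - aα - a²γ)Kb. -/
theorem parallel_of_linear_fractional_W_surface
    (ν₁ ν₂ a α β γ ε νb₁ νb₂ Hb Hb' Kb : ℝ) (ha : a ≠ 0)
    (h1 : 1 - a * ν₁ ≠ 0) (h2 : 1 - a * ν₂ ≠ 0)
    (hε : ε = Real.sign ((1 - a * ν₁) * (1 - a * ν₂)))
    (hrel : ν₁ * ν₂ = α * ((ν₁ + ν₂) / 2) + β * ((ν₁ - ν₂) / 2) + γ)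
    (hn1 : νb₁ = ε * ν₁ / (1 - a * ν₁))
    (hn2 : νb₂ = ε * ν₂ / (1 - a * ν₂))
    (hHb : Hb = (νb₁ + νb₂) / 2) (hHb' : Hb' = (νb₁ - νb₂) / 2) (hKb : Kb = νb₁ * νb₂) :
    ε * (α + 2 * a * γ) * Hb + ε * β * Hb' + γ = (1 - a * α - a ^ 2 * γ) * Kb := by
  have hcase : ε = 1 ∨ ε = -1 := by
    rcases (mul_ne_zero h1 h2).lt_or_gt with h | h
    · right; rw [hε, Real.sign_of_neg h]
    · left; rw [hε, Real.sign_of_pos h]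
  subst hn1 hn2 hHb hHb' hKb
  rcases hcase with h | h <;> subst h <;> field_simp <;>
    linear_combination (-2) * hrel
end

section
/- If f, g : I → ℝ are differentiable with f - g nonvanishing, and f̄ = εf/(1-af), ḡ = εg/(1-ag), then exp(2∫_{ν₀}^{ν} ḡ'/(ḡ - f̄)) = ((1-a·g(ν₀))²/(1-a·g(ν))²)·exp(2∫_{ν₀}^{ν} g'/(g-f)) for all ν ∈ I. -/
/-- For C¹ Weingarten functions f, g with f - g nonvanishing and
f̄ = εf/(1-af), ḡ = εg/(1-ag),
exp(2∫_{ν₀}^{ν} ḡ'/(ḡ - f̄)) = ((1-a·g(ν₀))²/(1-a·g(ν))²)·exp(2∫_{ν₀}^{ν} g'/(g-f)). -/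
theorem parallel_Weingarten_integrating_factor
    (I : Set ℝ) (hI : IsOpen I) (hconn : Convex ℝ I) (ν₀ : ℝ) (hν₀ : ν₀ ∈ I)
    (f g f' g' : ℝ → ℝ) (a ε : ℝ) (ha : a ≠ 0) (hε : ε = 1 ∨ ε = -1)
    (hfg : ∀ ν ∈ I, f ν ≠ g ν)
    (h1 : ∀ ν ∈ I, 1 - a * f ν ≠ 0) (h2 : ∀ ν ∈ I, 1 - a * g ν ≠ 0)
    (hf : ∀ ν ∈ I, HasDerivAt f (f' ν) ν) (hg : ∀ ν ∈ I, HasDerivAt g (g' ν) ν)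
    (hf' : ContinuousOn f' I) (hg' : ContinuousOn g' I) :
    ∀ ν ∈ I,
      Real.exp (2 * ∫ t in ν₀..ν,
          (ε * g' t / (1 - a * g t) ^ 2) /
            (ε * g t / (1 - a * g t) - ε * f t / (1 - a * f t))) =
        ((1 - a * g ν₀) ^ 2 / (1 - a * g ν) ^ 2) *
          Real.exp (2 * ∫ t in ν₀..ν, g' t / (g t - f t)) := by
  intro ν hν
  have hεne : ε ≠ 0 := by rcases hε with h | h <;> simp [h]
  have hJ : Set.uIcc ν₀ ν ⊆ I := (hconn.ordConnected).uIcc_subset hν₀ hν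
  have hgc : ContinuousOn g (Set.uIcc ν₀ ν) := fun t ht =>
    (hg t (hJ ht)).continuousAt.continuousWithinAt
  have hfc : ContinuousOn f (Set.uIcc ν₀ ν) := fun t ht =>
    (hf t (hJ ht)).continuousAt.continuousWithinAt
  have hg'c : ContinuousOn g' (Set.uIcc ν₀ ν) := hg'.mono hJ
  have hsub : ∀ t ∈ Set.uIcc ν₀ ν, g t - f t ≠ 0 := fun t ht =>
    sub_ne_zero.mpr (fun h => hfg t (hJ ht) h.symm)
  have h2J : ∀ t ∈ Set.uIcc ν₀ ν, 1 - a * g t ≠ 0 := fun t ht => h2 t (hJ ht)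
  have h1J : ∀ t ∈ Set.uIcc ν₀ ν, 1 - a * f t ≠ 0 := fun t ht => h1 t (hJ ht)
  -- pointwise integrand identity
  have key : Set.EqOn
      (fun t => (ε * g' t / (1 - a * g t) ^ 2) /
            (ε * g t / (1 - a * g t) - ε * f t / (1 - a * f t)))
      (fun t => g' t / (g t - f t) + a * g' t / (1 - a * g t)) (Set.uIcc ν₀ ν) := by
    intro t ht
    have h1t := h1J t ht
    have h2t := h2J t ht
    have hst := hsub t ht
    have hdiff : ε * g t / (1 - a * g t) - ε * f t / (1 - a * f t)
        = ε * (g t - f t) / ((1 - a * g t) * (1 - a * f t)) := by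
      rw [div_sub_div _ _ h2t h1t]
      ring
    simp only [hdiff]
    field_simp
    ring
  have int1 : IntervalIntegrable (fun t => g' t / (g t - f t)) MeasureTheory.volume ν₀ ν :=
    (hg'c.div (hgc.sub hfc) hsub).intervalIntegrable
  have int2 : IntervalIntegrable (fun t => a * g' t / (1 - a * g t)) MeasureTheory.volume ν₀ ν :=
    ((continuousOn_const.mul hg'c).div
      (continuousOn_const.sub (continuousOn_const.mul hgc)) h2J).intervalIntegrable
  have ftc : (∫ t in ν₀..ν, a * g' t / (1 - a * g t))
      = -Real.log (1 - a * g ν) - -Real.log (1 - a * g ν₀) := by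
    apply intervalIntegral.integral_eq_sub_of_hasDerivAt
    · intro t ht
      have hin : HasDerivAt (fun t => 1 - a * g t) (-(a * g' t)) t := by
        simpa using ((hg t (hJ ht)).const_mul a).const_sub 1
      have h2t := h2J t ht
      have hlog := ((Real.hasDerivAt_log h2t).comp t hin).neg
      convert hlog using 1
      · rfl
      · simp only [mul_neg, neg_neg]; rw [div_eq_inv_mul]
    · exact int2
  rw [intervalIntegral.integral_congr key, intervalIntegral.integral_add int1 int2, ftc]
  set A := ∫ t in ν₀..ν, g' t / (g t - f t) with hA
  have h2ν := h2 ν hν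
  have h2ν₀ := h2 ν₀ hν₀
  have e1 : Real.exp (2 * Real.log (1 - a * g ν₀)) = (1 - a * g ν₀) ^ 2 := by
    rw [two_mul, Real.exp_add, Real.exp_log_eq_abs h2ν₀, ← sq, sq_abs]
  have e2 : Real.exp (2 * Real.log (1 - a * g ν)) = (1 - a * g ν) ^ 2 := by
    rw [two_mul, Real.exp_add, Real.exp_log_eq_abs h2ν, ← sq, sq_abs]
  have hre : 2 * (A + (-Real.log (1 - a * g ν) - -Real.log (1 - a * g ν₀)))
      = (2 * A + 2 * Real.log (1 - a * g ν₀)) - 2 * Real.log (1 - a * g ν) := by ring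
  rw [hre, Real.exp_sub, Real.exp_add, e1, e2]
  ring
end
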